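/- Let K be an infinite field of characteristic different from 2 and 3, let A be an associative unital K-algebra, and let n ≥ 2. Then for every f ∈ T^{(n)}(A) and all a, b ∈ A, both [[f, a], b] and [f, [a, b]] belong to T^{(n+2)}(A). -/

import Mathlib

/-- The right-normed commutator: `rnComm a [b₁, …, b_k] = [a, b₁, …, b_k]`,
where `[u, v] = u * v - v * u`. -/
def rnComm {A : Type*} [Ring A] : A → List A → A
  | a, [] => a
  | a, b :: l => rnComm (a * b - b * a) l

/-- `Tideal A m` is the two-sided ideal `T⁽ᵐ⁾(A)` of `A` generated by all
right-normed commutators `[a₁, …, a_m]` of length `m`. -/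
def Tideal (A : Type*) [Ring A] (m : ℕ) : TwoSidedIdeal A :=
  TwoSidedIdeal.span { x | ∃ (a : A) (l : List A), l.length + 1 = m ∧ rnComm a l = x }

private lemma rnComm_append {A : Type*} [Ring A] (a : A) (l₁ l₂ : List A) :
    rnComm a (l₁ ++ l₂) = rnComm (rnComm a l₁) l₂ := by
  induction l₁ generalizing a with
  | nil => rfl
  | cons b l ih => exact ih (a * b - b * a)

private lemma lie_memI {A : Type*} [Ring A] (I : TwoSidedIdeal A) {x : A} (hx : x ∈ I)
    (y : A) : ⁅x, y⁆ ∈ I := by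
  rw [Ring.lie_def]
  exact I.sub_mem (I.mul_mem_right x y hx) (I.mul_mem_left y x hx)

private lemma smul_memI {A : Type*} [Ring A] {K : Type*} [CommSemiring K] [Algebra K A]
    (I : TwoSidedIdeal A) (k : K) {x : A} (hx : x ∈ I) : k • x ∈ I := by
  rw [Algebra.smul_def]
  exact I.mul_mem_left _ _ hx

section KeyLemmas

variable {A : Type*} [Ring A]

/-- `⁅⁅e,u⁆,⁅v,w⁆⁆ ∈ I`. -/
private lemma lieE2 (I : TwoSidedIdeal A) (e : A)
    (hE : ∀ u v w : A, ⁅⁅⁅e,u⁆,v⁆,w⁆ ∈ I) (u v w : A) : ⁅⁅e,u⁆,⁅v,w⁆⁆ ∈ I := by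
  have h : ⁅⁅e,u⁆,⁅v,w⁆⁆ = ⁅⁅⁅e,u⁆,v⁆,w⁆ - ⁅⁅⁅e,u⁆,w⁆,v⁆ := by
    simp only [Ring.lie_def]; noncomm_ring
  rw [h]; exact I.sub_mem (hE u v w) (hE u w v)

/-- `⁅⁅e,s⁆,⁅⁅p,q⁆,r⁆⁆ ∈ I`. -/
private lemma lieE3 (I : TwoSidedIdeal A) (e : A)
    (hE : ∀ u v w : A, ⁅⁅⁅e,u⁆,v⁆,w⁆ ∈ I) (s p q r : A) : ⁅⁅e,s⁆,⁅⁅p,q⁆,r⁆⁆ ∈ I := by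
  have h : ⁅⁅e,s⁆,⁅⁅p,q⁆,r⁆⁆ = ⁅⁅⁅e,s⁆,⁅p,q⁆⁆,r⁆ - ⁅⁅⁅e,s⁆,r⁆,⁅p,q⁆⁆ := by
    simp only [Ring.lie_def]; noncomm_ring
  rw [h]
  exact I.sub_mem (lie_memI I (lieE2 I e hE s p q) r) (hE s r ⁅p,q⁆)

/-- the ★ relation: `⁅⁅e,u⁆,p⁆*⁅q,w⁆ + ⁅⁅e,u⁆,q⁆*⁅p,w⁆ ∈ I`. -/
private lemma star (I : TwoSidedIdeal A) (e : A)
    (hE : ∀ u v w : A, ⁅⁅⁅e,u⁆,v⁆,w⁆ ∈ I) (u p q w : A) :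
    ⁅⁅e,u⁆,p⁆*⁅q,w⁆ + ⁅⁅e,u⁆,q⁆*⁅p,w⁆ ∈ I := by
  have h : ⁅⁅e,u⁆,p⁆*⁅q,w⁆ + ⁅⁅e,u⁆,q⁆*⁅p,w⁆ =
      ⁅⁅⁅e,u⁆,p*q⁆,w⁆ - ⁅⁅⁅e,u⁆,p⁆,w⁆*q - p*⁅⁅⁅e,u⁆,q⁆,w⁆ + ⁅⁅⁅e,u⁆,q⁆,⁅p,w⁆⁆ := by
    simp only [Ring.lie_def]; noncomm_ring
  rw [h]
  exact I.add_mem (I.sub_mem (I.sub_mem (hE u (p*q) w)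
    (I.mul_mem_right _ q (hE u p w))) (I.mul_mem_left p _ (hE u q w))) (hE u q ⁅p,w⁆)

/-- the pair relation. -/
private lemma pair (I : TwoSidedIdeal A) (e : A)
    (hE : ∀ u v w : A, ⁅⁅⁅e,u⁆,v⁆,w⁆ ∈ I) (p q v w : A) :
    ⁅e,p⁆*⁅⁅q,v⁆,w⁆ + ⁅e,q⁆*⁅⁅p,v⁆,w⁆ + ⁅⁅e,p⁆,v⁆*⁅q,w⁆ +
      ⁅⁅e,p⁆,w⁆*⁅q,v⁆ + ⁅⁅e,q⁆,v⁆*⁅p,w⁆ + ⁅⁅e,q⁆,w⁆*⁅p,v⁆ ∈ I := by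
  have h : ⁅e,p⁆*⁅⁅q,v⁆,w⁆ + ⁅e,q⁆*⁅⁅p,v⁆,w⁆ + ⁅⁅e,p⁆,v⁆*⁅q,w⁆ +
      ⁅⁅e,p⁆,w⁆*⁅q,v⁆ + ⁅⁅e,q⁆,v⁆*⁅p,w⁆ + ⁅⁅e,q⁆,w⁆*⁅p,v⁆ =
      ⁅⁅⁅e,p*q⁆,v⁆,w⁆ - ⁅⁅⁅e,p⁆,v⁆,w⁆*q - p*⁅⁅⁅e,q⁆,v⁆,w⁆ +
        ⁅⁅⁅e,q⁆,w⁆,⁅p,v⁆⁆ + ⁅⁅⁅e,q⁆,v⁆,⁅p,w⁆⁆ + ⁅⁅e,q⁆,⁅⁅p,v⁆,w⁆⁆ := by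
    simp only [Ring.lie_def]; noncomm_ring
  rw [h]
  exact I.add_mem (I.add_mem (I.add_mem (I.sub_mem (I.sub_mem (hE (p*q) v w)
    (I.mul_mem_right _ q (hE p v w))) (I.mul_mem_left p _ (hE q v w)))
    (hE q w ⁅p,v⁆)) (hE q v ⁅p,w⁆)) (lieE3 I e hE q p v w)

private lemma lemB {A : Type*} [Ring A] (K : Type*) [Field K] [Algebra K A]
    (h3 : (3 : K) ≠ 0) (I : TwoSidedIdeal A) (e : A)
    (hE : ∀ u v w : A, ⁅⁅⁅e,u⁆,v⁆,w⁆ ∈ I) (t x y z : A) :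
    ⁅e,t⁆ * ⁅⁅x,y⁆,z⁆ ∈ I := by
  have hB0 := star I e hE t x y z
  have hB1 := star I e hE t x z y
  have hB2 := star I e hE t y z x
  have hB3 := star I e hE x t y z
  have hB4 := star I e hE x t z y
  have hB5 := star I e hE x y z t
  have hB6 := star I e hE y t x z
  have hB7 := star I e hE y t z x
  have hB8 := star I e hE y x z t
  have hB9 := star I e hE z t x y
  have hB10 := star I e hE z t y x
  have hB11 := star I e hE z x y t
  have hP0 := pair I e hE t x z y
  have hP1 := pair I e hE t y x z
  have hP2 := pair I e hE t y z x
  have hP3 := pair I e hE t z x y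
  have hP4 := pair I e hE x y t z
  have hP5 := pair I e hE x y z t
  have hP6 := pair I e hE x z y t
  have hP7 := pair I e hE y z t x
  have key : 3 * (⁅e,t⁆ * ⁅⁅x,y⁆,z⁆) =
      2 * (⁅⁅e,t⁆,x⁆*⁅y,z⁆ + ⁅⁅e,t⁆,y⁆*⁅x,z⁆) +
      (⁅⁅e,t⁆,x⁆*⁅z,y⁆ + ⁅⁅e,t⁆,z⁆*⁅x,y⁆) +
      3 * (⁅⁅e,t⁆,y⁆*⁅z,x⁆ + ⁅⁅e,t⁆,z⁆*⁅y,x⁆) +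
      (⁅⁅e,x⁆,t⁆*⁅y,z⁆ + ⁅⁅e,x⁆,y⁆*⁅t,z⁆) +
      (⁅⁅e,x⁆,t⁆*⁅z,y⁆ + ⁅⁅e,x⁆,z⁆*⁅t,y⁆) +
      2 * (⁅⁅e,x⁆,y⁆*⁅z,t⁆ + ⁅⁅e,x⁆,z⁆*⁅y,t⁆) +
      3 * (⁅⁅e,y⁆,t⁆*⁅x,z⁆ + ⁅⁅e,y⁆,x⁆*⁅t,z⁆) +
      3 * (⁅⁅e,y⁆,t⁆*⁅z,x⁆ + ⁅⁅e,y⁆,z⁆*⁅t,x⁆) +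
      2 * (⁅⁅e,y⁆,x⁆*⁅z,t⁆ + ⁅⁅e,y⁆,z⁆*⁅x,t⁆) +
      2 * (⁅⁅e,z⁆,t⁆*⁅x,y⁆ + ⁅⁅e,z⁆,x⁆*⁅t,y⁆) +
      2 * (⁅⁅e,z⁆,t⁆*⁅y,x⁆ + ⁅⁅e,z⁆,y⁆*⁅t,x⁆) +
      2 * (⁅⁅e,z⁆,x⁆*⁅y,t⁆ + ⁅⁅e,z⁆,y⁆*⁅x,t⁆) -
      (⁅e,t⁆*⁅⁅x,z⁆,y⁆ + ⁅e,x⁆*⁅⁅t,z⁆,y⁆ + ⁅⁅e,t⁆,z⁆*⁅x,y⁆ + ⁅⁅e,t⁆,y⁆*⁅x,z⁆ + ⁅⁅e,x⁆,z⁆*⁅t,y⁆ + ⁅⁅e,x⁆,y⁆*⁅t,z⁆) -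
      2 * (⁅e,t⁆*⁅⁅y,x⁆,z⁆ + ⁅e,y⁆*⁅⁅t,x⁆,z⁆ + ⁅⁅e,t⁆,x⁆*⁅y,z⁆ + ⁅⁅e,t⁆,z⁆*⁅y,x⁆ + ⁅⁅e,y⁆,x⁆*⁅t,z⁆ + ⁅⁅e,y⁆,z⁆*⁅t,x⁆) -
      (⁅e,t⁆*⁅⁅y,z⁆,x⁆ + ⁅e,y⁆*⁅⁅t,z⁆,x⁆ + ⁅⁅e,t⁆,z⁆*⁅y,x⁆ + ⁅⁅e,t⁆,x⁆*⁅y,z⁆ + ⁅⁅e,y⁆,z⁆*⁅t,x⁆ + ⁅⁅e,y⁆,x⁆*⁅t,z⁆) -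
      2 * (⁅e,t⁆*⁅⁅z,x⁆,y⁆ + ⁅e,z⁆*⁅⁅t,x⁆,y⁆ + ⁅⁅e,t⁆,x⁆*⁅z,y⁆ + ⁅⁅e,t⁆,y⁆*⁅z,x⁆ + ⁅⁅e,z⁆,x⁆*⁅t,y⁆ + ⁅⁅e,z⁆,y⁆*⁅t,x⁆) -
      (⁅e,x⁆*⁅⁅y,t⁆,z⁆ + ⁅e,y⁆*⁅⁅x,t⁆,z⁆ + ⁅⁅e,x⁆,t⁆*⁅y,z⁆ + ⁅⁅e,x⁆,z⁆*⁅y,t⁆ + ⁅⁅e,y⁆,t⁆*⁅x,z⁆ + ⁅⁅e,y⁆,z⁆*⁅x,t⁆) -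
      (⁅e,x⁆*⁅⁅y,z⁆,t⁆ + ⁅e,y⁆*⁅⁅x,z⁆,t⁆ + ⁅⁅e,x⁆,z⁆*⁅y,t⁆ + ⁅⁅e,x⁆,t⁆*⁅y,z⁆ + ⁅⁅e,y⁆,z⁆*⁅x,t⁆ + ⁅⁅e,y⁆,t⁆*⁅x,z⁆) -
      2 * (⁅e,x⁆*⁅⁅z,y⁆,t⁆ + ⁅e,z⁆*⁅⁅x,y⁆,t⁆ + ⁅⁅e,x⁆,y⁆*⁅z,t⁆ + ⁅⁅e,x⁆,t⁆*⁅z,y⁆ + ⁅⁅e,z⁆,y⁆*⁅x,t⁆ + ⁅⁅e,z⁆,t⁆*⁅x,y⁆) -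
      2 * (⁅e,y⁆*⁅⁅z,t⁆,x⁆ + ⁅e,z⁆*⁅⁅y,t⁆,x⁆ + ⁅⁅e,y⁆,t⁆*⁅z,x⁆ + ⁅⁅e,y⁆,x⁆*⁅z,t⁆ + ⁅⁅e,z⁆,t⁆*⁅y,x⁆ + ⁅⁅e,z⁆,x⁆*⁅y,t⁆) := by
    simp only [Ring.lie_def]
    noncomm_ring
  have h3mem : (3 : K) • (⁅e,t⁆ * ⁅⁅x,y⁆,z⁆) ∈ I := by
    rw [Algebra.smul_def, map_ofNat, key]
    exact (I.sub_mem (I.sub_mem (I.sub_mem (I.sub_mem (I.sub_mem (I.sub_mem (I.sub_mem (I.sub_mem (I.add_mem (I.add_mem (I.add_mem (I.add_mem (I.add_mem (I.add_mem (I.add_mem (I.add_mem (I.add_mem (I.add_mem (I.add_mem (I.mul_mem_left 2 _ hB0) hB1) (I.mul_mem_left 3 _ hB2)) hB3) hB4) (I.mul_mem_left 2 _ hB5)) (I.mul_mem_left 3 _ hB6)) (I.mul_mem_left 3 _ hB7)) (I.mul_mem_left 2 _ hB8)) (I.mul_mem_left 2 _ hB9)) (I.mul_mem_left 2 _ hB10))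 (I.mul_mem_left 2 _ hB11)) hP0) (I.mul_mem_left 2 _ hP1)) hP2) (I.mul_mem_left 2 _ hP3)) hP4) hP5) (I.mul_mem_left 2 _ hP6)) (I.mul_mem_left 2 _ hP7))
  have h := smul_memI I ((3:K)⁻¹) h3mem
  rwa [inv_smul_smul₀ h3] at h

/-- main key lemma: `⁅⁅u*⁅e,t⁆*v, a⁆, b⁆ ∈ I`. -/
private lemma keyMain (K : Type*) [Field K] [Algebra K A] (h3 : (3 : K) ≠ 0)
    (I : TwoSidedIdeal A) (e t : A)
    (hE : ∀ u v w : A, ⁅⁅⁅e,u⁆,v⁆,w⁆ ∈ I) (u v a b : A) :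
    ⁅⁅u * ⁅e,t⁆ * v, a⁆, b⁆ ∈ I := by
  -- part 1 : ⁅⁅⁅⁅e,t⁆,u⁆*v, a⁆, b⁆ ∈ I
  have part1 : ⁅⁅⁅⁅e,t⁆,u⁆*v, a⁆, b⁆ ∈ I := by
    have m4 : ⁅⁅e,t⁆,u⁆ * ⁅⁅v,a⁆,b⁆ ∈ I := by
      have hs := star I e hE t u ⁅v,a⁆ b
      have h2 := I.mul_mem_right _ ⁅u,b⁆ (lieE2 I e hE t v a)
      have h : ⁅⁅e,t⁆,u⁆ * ⁅⁅v,a⁆,b⁆ =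
          (⁅⁅e,t⁆,u⁆*⁅⁅v,a⁆,b⁆ + ⁅⁅e,t⁆,⁅v,a⁆⁆*⁅u,b⁆) - ⁅⁅e,t⁆,⁅v,a⁆⁆*⁅u,b⁆ := by abel
      rw [h]; exact I.sub_mem hs h2
    have h : ⁅⁅⁅⁅e,t⁆,u⁆*v, a⁆, b⁆ =
        ⁅⁅⁅⁅e,t⁆,u⁆,a⁆,b⁆*v + ⁅⁅⁅e,t⁆,u⁆,a⁆*⁅v,b⁆ + ⁅⁅⁅e,t⁆,u⁆,b⁆*⁅v,a⁆ +
          ⁅⁅e,t⁆,u⁆*⁅⁅v,a⁆,b⁆ := by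
      simp only [Ring.lie_def]; noncomm_ring
    rw [h]
    exact I.add_mem (I.add_mem (I.add_mem
      (I.mul_mem_right _ v (lie_memI I (hE t u a) b))
      (I.mul_mem_right _ _ (hE t u a))) (I.mul_mem_right _ _ (hE t u b))) m4
  -- part 2 : ⁅⁅⁅e,t⁆*w, a⁆, b⁆ ∈ I for any w
  have part2 : ∀ w : A, ⁅⁅⁅e,t⁆*w, a⁆, b⁆ ∈ I := by
    intro w
    have hpair : ⁅⁅e,t⁆,a⁆*⁅w,b⁆ + ⁅⁅e,t⁆,b⁆*⁅w,a⁆ ∈ I := by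
      have h1 := star I e hE t a w b
      have h2 := star I e hE t b w a
      have h : ⁅⁅e,t⁆,a⁆*⁅w,b⁆ + ⁅⁅e,t⁆,b⁆*⁅w,a⁆ =
          (⁅⁅e,t⁆,a⁆*⁅w,b⁆ + ⁅⁅e,t⁆,w⁆*⁅a,b⁆) +
            (⁅⁅e,t⁆,b⁆*⁅w,a⁆ + ⁅⁅e,t⁆,w⁆*⁅b,a⁆) := by
        simp only [Ring.lie_def]; noncomm_ring
      rw [h]; exact I.add_mem h1 h2
    have h : ⁅⁅⁅e,t⁆*w, a⁆, b⁆ =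
        ⁅⁅⁅e,t⁆,a⁆,b⁆*w + (⁅⁅e,t⁆,a⁆*⁅w,b⁆ + ⁅⁅e,t⁆,b⁆*⁅w,a⁆) + ⁅e,t⁆*⁅⁅w,a⁆,b⁆ := by
      simp only [Ring.lie_def]; noncomm_ring
    rw [h]
    exact I.add_mem (I.add_mem (I.mul_mem_right _ w (hE t a b)) hpair)
      (lemB K h3 I e hE t w a b)
  have h : ⁅⁅u * ⁅e,t⁆ * v, a⁆, b⁆ =
      ⁅⁅⁅e,t⁆*(u*v), a⁆, b⁆ - ⁅⁅⁅⁅e,t⁆,u⁆*v, a⁆, b⁆ := by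
    simp only [Ring.lie_def]; noncomm_ring
  rw [h]
  exact I.sub_mem (part2 (u*v)) part1

end KeyLemmas

/-- **Lemma 1.3.** For any associative unital algebra `A` over an infinite field of
characteristic `≠ 2, 3`, any `n ≥ 2`, any `f ∈ T⁽ⁿ⁾(A)` and any `a, b ∈ A`, both
`[[f, a], b]` and `[f, [a, b]]` lie in `T⁽ⁿ⁺²⁾(A)`. -/
theorem comm_Tideal_mem
    (K : Type*) [Field K] [Infinite K] (h2 : (2 : K) ≠ 0) (h3 : (3 : K) ≠ 0)
    (A : Type*) [Ring A] [Algebra K A]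
    (n : ℕ) (hn : 2 ≤ n) (f : A) (hf : f ∈ Tideal A n) (a b : A) :
    ((f * a - a * f) * b - b * (f * a - a * f)) ∈ Tideal A (n + 2) ∧
    (f * (a * b - b * a) - (a * b - b * a) * f) ∈ Tideal A (n + 2) := by
  set I := Tideal A (n + 2) with hI
  -- the auxiliary two-sided ideal
  have main : ∀ u v a b : A, ⁅⁅u * f * v, a⁆, b⁆ ∈ I := by
    let J : TwoSidedIdeal A := TwoSidedIdeal.mk'
      { x | ∀ u v a b : A, ⁅⁅u * x * v, a⁆, b⁆ ∈ I }
      (fun u v a b => by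
        simp only [mul_zero, zero_mul, Ring.lie_def]
        simpa using I.zero_mem)
      (fun {x y} hx hy u v a b => by
        have h := I.add_mem (hx u v a b) (hy u v a b)
        have e : ⁅⁅u * (x + y) * v, a⁆, b⁆ = ⁅⁅u * x * v, a⁆, b⁆ + ⁅⁅u * y * v, a⁆, b⁆ := by
          simp only [Ring.lie_def]; noncomm_ring
        rwa [e])
      (fun {x} hx u v a b => by
        have h := I.neg_mem (hx u v a b)
        have e : ⁅⁅u * (-x) * v, a⁆, b⁆ = -⁅⁅u * x * v, a⁆, b⁆ := by
          simp only [Ring.lie_def]; noncomm_ring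
        rwa [e])
      (fun {x y} hy u v a b => by
        have h := hy (u * x) v a b
        rwa [show u * x * y * v = u * (x * y) * v by noncomm_ring] at h)
      (fun {x y} hx u v a b => by
        have h := hx u (y * v) a b
        rwa [show u * x * (y * v) = u * (x * y) * v by noncomm_ring] at h)
    have hgen : { x | ∃ (c : A) (l : List A), l.length + 1 = n ∧ rnComm c l = x } ⊆ J := by
      rintro x ⟨c, l, hlen, rfl⟩
      rw [SetLike.mem_coe, TwoSidedIdeal.mem_mk']
      intro u v a b
      -- split l as l.dropLast ++ [t]
      have hne : l ≠ [] := by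
        intro hl
        rw [hl] at hlen; simp at hlen; omega
      have hsplit : l = l.dropLast ++ [l.getLast hne] := (l.dropLast_append_getLast hne).symm
      set e := rnComm c l.dropLast with he
      set t := l.getLast hne with ht
      have hx : rnComm c l = ⁅e, t⁆ := by
        rw [Ring.lie_def]
        conv_lhs => rw [hsplit]
        rw [rnComm_append]
        rfl
      have hlen' : l.dropLast.length = n - 2 := by
        have := l.length_dropLast
        omega
      have hE : ∀ p q r : A, ⁅⁅⁅e,p⁆,q⁆,r⁆ ∈ I := by
        intro p q r
        have hm : ⁅⁅⁅e,p⁆,q⁆,r⁆ = rnComm c (l.dropLast ++ [p, q, r]) := by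
          rw [rnComm_append]
          simp only [Ring.lie_def, rnComm]
          rfl
        rw [hI, hm, Tideal]
        apply TwoSidedIdeal.subset_span
        exact ⟨c, l.dropLast ++ [p, q, r], by simp [hlen']; omega, rfl⟩
      rw [hx]
      exact keyMain K h3 I e t hE u v a b
    intro u v a' b'
    have hfJ : f ∈ J := by
      rw [Tideal, TwoSidedIdeal.mem_span_iff] at hf
      exact hf J hgen
    rw [TwoSidedIdeal.mem_mk'] at hfJ
    exact hfJ u v a' b'
  have h1 : ⁅⁅f, a⁆, b⁆ ∈ I := by
    have h := main 1 1 a b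
    rwa [one_mul, mul_one] at h
  have h2' : ⁅⁅f, b⁆, a⁆ ∈ I := by
    have h := main 1 1 b a
    rwa [one_mul, mul_one] at h
  constructor
  · have : (f * a - a * f) * b - b * (f * a - a * f) = ⁅⁅f, a⁆, b⁆ := by
      simp only [Ring.lie_def]
    rw [this]; exact h1
  · have : f * (a * b - b * a) - (a * b - b * a) * f = ⁅⁅f, a⁆, b⁆ - ⁅⁅f, b⁆, a⁆ := by
      simp only [Ring.lie_def]; noncomm_ring
    rw [this]; exact I.sub_mem h1 h2'
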